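/- In the ring of 4×4 real matrices, with x_1(a) = I + a·E_{12}, x_2(a) = I + a·E_{23}, x_3(a) = I + a·E_{34}: for all positive reals b_1, b_2, b_3, b_2' there exists a unique quadruple of positive reals (a_1, a_2, a_3, a_2') such that x_2(a_2)·x_3(a_3)·x_1(a_1)·x_2(a_2')·x_2(a_2')·x_3(a_1)·x_1(a_3)·x_2(a_2) = x_3(b_3)·x_2(b_2)·x_1(b_1)·x_2(b_2')·x_2(b_2')·x_3(b_1)·x_2(b_2)·x_1(b_3). Moreover, setting δ = b_3^2 + (b_2·b_3·(b_1+b_3))/b_2' (so δ > 0), the solution is given by a_1 = b_1·(b_1+b_3)/(b_1 + √δ), a_3 = (b_1+b_3)·√δ/(b_1 + √δ), a_2' = b_2'·(b_1 + √δ)^2/(b_1+b_3)^2, and a_2 = b_2^2·b_1/(b_2·b_1 + b_2·b_3 + 2·b_2'·b_3 + 2·b_2'·√δ), where √δ is the positive square root of δ. -/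

import Mathlib

/-- The Chevalley generator `x₁(a) = I + a·E₁₂` of the upper unitriangular subgroup of `SL₄(ℝ)`. -/
def x1 (a : ℝ) : Matrix (Fin 4) (Fin 4) ℝ := !![1, a, 0, 0; 0, 1, 0, 0; 0, 0, 1, 0; 0, 0, 0, 1]

/-- The Chevalley generator `x₂(a) = I + a·E₂₃` of the upper unitriangular subgroup of `SL₄(ℝ)`. -/
def x2 (a : ℝ) : Matrix (Fin 4) (Fin 4) ℝ := !![1, 0, 0, 0; 0, 1, a, 0; 0, 0, 1, 0; 0, 0, 0, 1]

/-- The Chevalley generator `x₃(a) = I + a·E₃₄` of the upper unitriangular subgroup of `SL₄(ℝ)`. -/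
def x3 (a : ℝ) : Matrix (Fin 4) (Fin 4) ℝ := !![1, 0, 0, 0; 0, 1, 0, 0; 0, 0, 1, a; 0, 0, 0, 1]

/-- The discriminant `δ = b₃² + b₂b₃(b₁+b₃)/b₂'` of the inverse direction of Lusztig 4.6. -/
noncomputable def deltav (b1 b2 b3 b2' : ℝ) : ℝ := b3 ^ 2 + b2 * b3 * (b1 + b3) / b2'

/-- The explicit value of `a₁` in the inverse direction of Lusztig 4.6
(with the sign `ε = 1` forced by positivity). -/
noncomputable def a1v (b1 b2 b3 b2' : ℝ) : ℝ :=
  b1 * (b1 + b3) / (b1 + Real.sqrt (deltav b1 b2 b3 b2'))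

/-- The explicit value of `a₃` in the inverse direction of Lusztig 4.6. -/
noncomputable def a3v (b1 b2 b3 b2' : ℝ) : ℝ :=
  (b1 + b3) * Real.sqrt (deltav b1 b2 b3 b2') / (b1 + Real.sqrt (deltav b1 b2 b3 b2'))

/-- The explicit value of `a₂'` in the inverse direction of Lusztig 4.6. -/
noncomputable def a2'v (b1 b2 b3 b2' : ℝ) : ℝ :=
  b2' * (b1 + Real.sqrt (deltav b1 b2 b3 b2')) ^ 2 / (b1 + b3) ^ 2

/-- The explicit value of `a₂` in the inverse direction of Lusztig 4.6. -/
noncomputable def a2v (b1 b2 b3 b2' : ℝ) : ℝ :=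
  b2 ^ 2 * b1 / (b2 * b1 + b2 * b3 + 2 * b2' * b3 +
    2 * b2' * Real.sqrt (deltav b1 b2 b3 b2'))

lemma mul_fin_four' (a11 a12 a13 a14 a21 a22 a23 a24 a31 a32 a33 a34 a41 a42 a43 a44
    b11 b12 b13 b14 b21 b22 b23 b24 b31 b32 b33 b34 b41 b42 b43 b44 : ℝ) :
    !![a11,a12,a13,a14; a21,a22,a23,a24; a31,a32,a33,a34; a41,a42,a43,a44] *
    !![b11,b12,b13,b14; b21,b22,b23,b24; b31,b32,b33,b34; b41,b42,b43,b44] =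
    !![a11*b11+a12*b21+a13*b31+a14*b41, a11*b12+a12*b22+a13*b32+a14*b42,
       a11*b13+a12*b23+a13*b33+a14*b43, a11*b14+a12*b24+a13*b34+a14*b44;
       a21*b11+a22*b21+a23*b31+a24*b41, a21*b12+a22*b22+a23*b32+a24*b42,
       a21*b13+a22*b23+a23*b33+a24*b43, a21*b14+a22*b24+a23*b34+a24*b44;
       a31*b11+a32*b21+a33*b31+a34*b41, a31*b12+a32*b22+a33*b32+a34*b42,
       a31*b13+a32*b23+a33*b33+a34*b43, a31*b14+a32*b24+a33*b34+a34*b44;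
       a41*b11+a42*b21+a43*b31+a44*b41, a41*b12+a42*b22+a43*b32+a44*b42,
       a41*b13+a42*b23+a43*b33+a44*b43, a41*b14+a42*b24+a43*b34+a44*b44] := by
  ext i j
  fin_cases i <;> fin_cases j <;> simp [Matrix.mul_apply, Fin.sum_univ_four]

lemma prodL (c1 c2 c3 c2p : ℝ) :
    x2 c2 * x3 c3 * x1 c1 * x2 c2p * x2 c2p * x3 c1 * x1 c3 * x2 c2 =
    !![1, c1+c3, c2*c3+2*c1*c2p+c1*c2, 2*c1^2*c2p;
       0, 1, 2*c2+2*c2p, c2*c3+2*c1*c2p+c1*c2;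
       0, 0, 1, c1+c3;
       0, 0, 0, 1] := by
  simp only [x1, x2, x3, mul_fin_four']
  norm_num
  refine ⟨⟨?_, ?_, ?_⟩, ?_, ?_⟩ <;> ring

lemma prodR (d1 d2 d3 d2p : ℝ) :
    x3 d3 * x2 d2 * x1 d1 * x2 d2p * x2 d2p * x3 d1 * x2 d2 * x1 d3 =
    !![1, d1+d3, d1*d2+2*d1*d2p, 2*d1^2*d2p;
       0, 1, 2*d2+2*d2p, d1*d2+2*d1*d2p;
       0, 0, 1, d1+d3;
       0, 0, 0, 1] := by
  simp only [x1, x2, x3, mul_fin_four']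
  norm_num
  refine ⟨⟨?_, ?_, ?_⟩, ?_, ?_⟩ <;> ring

lemma keyiff (c1 c2 c3 c2p d1 d2 d3 d2p : ℝ) :
    x2 c2 * x3 c3 * x1 c1 * x2 c2p * x2 c2p * x3 c1 * x1 c3 * x2 c2 =
      x3 d3 * x2 d2 * x1 d1 * x2 d2p * x2 d2p * x3 d1 * x2 d2 * x1 d3 ↔
    (c1 + c3 = d1 + d3 ∧ c2 + c2p = d2 + d2p ∧
     c2*c3 + 2*c1*c2p + c1*c2 = d1*d2 + 2*d1*d2p ∧ c1^2*c2p = d1^2*d2p) := by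
  rw [prodL, prodR]
  constructor
  · intro h
    have h01 := congrFun (congrFun h 0) 1
    have h12 := congrFun (congrFun h 1) 2
    have h02 := congrFun (congrFun h 0) 2
    have h03 := congrFun (congrFun h 0) 3
    simp at h01 h12 h02 h03
    exact ⟨h01, by linarith, h02, by nlinarith [h03]⟩
  · rintro ⟨h1, h2, h3, h4⟩
    ext i j
    fin_cases i <;> fin_cases j <;> simp <;> linarith
set_option maxHeartbeats 1000000 in
/-- Lusztig 4.3(iv)/4.6, inverse direction: for positive `b₁, b₂, b₃, b₂'` there is a unique
quadruple of positive reals `(a₁, a₂, a₃, a₂')` solving the non-standard braid relation in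
type `A₃`, and it is given by the explicit formulas with `δ > 0`. -/
theorem transition_A3_inverse_explicit (b1 b2 b3 b2' : ℝ)
    (hb1 : 0 < b1) (hb2 : 0 < b2) (hb3 : 0 < b3) (hb2' : 0 < b2') :
    (∃! q : ℝ × ℝ × ℝ × ℝ,
      (0 < q.1 ∧ 0 < q.2.1 ∧ 0 < q.2.2.1 ∧ 0 < q.2.2.2) ∧
      x2 q.2.1 * x3 q.2.2.1 * x1 q.1 * x2 q.2.2.2 * x2 q.2.2.2 *
          x3 q.1 * x1 q.2.2.1 * x2 q.2.1 =
        x3 b3 * x2 b2 * x1 b1 * x2 b2' * x2 b2' * x3 b1 * x2 b2 * x1 b3) ∧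
    0 < deltav b1 b2 b3 b2' ∧
    x2 (a2v b1 b2 b3 b2') * x3 (a3v b1 b2 b3 b2') * x1 (a1v b1 b2 b3 b2') *
        x2 (a2'v b1 b2 b3 b2') * x2 (a2'v b1 b2 b3 b2') * x3 (a1v b1 b2 b3 b2') *
        x1 (a3v b1 b2 b3 b2') * x2 (a2v b1 b2 b3 b2') =
      x3 b3 * x2 b2 * x1 b1 * x2 b2' * x2 b2' * x3 b1 * x2 b2 * x1 b3 := by
  have hS : 0 < b1 + b3 := by linarith
  have hδ : 0 < deltav b1 b2 b3 b2' := by unfold deltav; positivity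
  set s := Real.sqrt (deltav b1 b2 b3 b2') with hs_def
  have hs : 0 < s := Real.sqrt_pos.2 hδ
  have hs2 : s ^ 2 = b3 ^ 2 + b2 * b3 * (b1 + b3) / b2' := by
    rw [hs_def, Real.sq_sqrt hδ.le]; rfl
  have hs2' : b2' * s ^ 2 = b2' * b3 ^ 2 + b2 * b3 * (b1 + b3) := by
    rw [hs2]; field_simp
  have hD : 0 < b1 + s := by linarith
  have hA1 : a1v b1 b2 b3 b2' = b1 * (b1 + b3) / (b1 + s) := rfl
  have hA3 : a3v b1 b2 b3 b2' = (b1 + b3) * s / (b1 + s) := rfl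
  have hA2p : a2'v b1 b2 b3 b2' = b2' * (b1 + s) ^ 2 / (b1 + b3) ^ 2 := rfl
  have hA2 : a2v b1 b2 b3 b2' = b2 ^ 2 * b1 / (b2 * b1 + b2 * b3 + 2 * b2' * b3 + 2 * b2' * s) := rfl
  have hDen : 0 < b2 * b1 + b2 * b3 + 2 * b2' * b3 + 2 * b2' * s := by positivity
  have h1pos : 0 < a1v b1 b2 b3 b2' := by rw [hA1]; positivity
  have h3pos : 0 < a3v b1 b2 b3 b2' := by rw [hA3]; positivity
  have h2ppos : 0 < a2'v b1 b2 b3 b2' := by rw [hA2p]; positivity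
  have h2pos : 0 < a2v b1 b2 b3 b2' := by rw [hA2]; positivity
  -- the four equations for the explicit values
  have hE1v : a1v b1 b2 b3 b2' + a3v b1 b2 b3 b2' = b1 + b3 := by
    rw [hA1, hA3, ← add_div, div_eq_iff hD.ne']; ring
  have hE4v : (a1v b1 b2 b3 b2') ^ 2 * a2'v b1 b2 b3 b2' = b1 ^ 2 * b2' := by
    rw [hA1, hA2p]; field_simp
  have hE2v : a2v b1 b2 b3 b2' + a2'v b1 b2 b3 b2' = b2 + b2' := by
    rw [hA2, hA2p]; field_simp
    linear_combination (b1*b2 + b2*b3 + 4*b1*b2' + 2*b3*b2' + 2*b2'*s) * hs2'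
  have hc2S : (b3 * (b2 + b2') - b1 * b2') * (b1 + b3) = b2' * (s ^ 2 - b1 ^ 2) := by
    linear_combination -hs2'
  have hQv : (b3 * (b2 + b2') - b1 * b2') * (a1v b1 b2 b3 b2') ^ 2
      + 2 * b1 ^ 2 * b2' * a1v b1 b2 b3 b2' = b1 ^ 2 * b2' * (b1 + b3) := by
    rw [hA1]; field_simp
    linear_combination (-1 : ℝ) * hs2'
  have hE3v : a2v b1 b2 b3 b2' * a3v b1 b2 b3 b2' + 2 * a1v b1 b2 b3 b2' * a2'v b1 b2 b3 b2'
      + a1v b1 b2 b3 b2' * a2v b1 b2 b3 b2' = b1 * b2 + 2 * b1 * b2' := by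
    have h : ((b2 + b2' - a2'v b1 b2 b3 b2') * (b1 + b3) + 2 * a1v b1 b2 b3 b2' * a2'v b1 b2 b3 b2'
        - (b1 * b2 + 2 * b1 * b2')) * (a1v b1 b2 b3 b2') ^ 2 = 0 := by
      linear_combination hQv + (2 * a1v b1 b2 b3 b2' - (b1 + b3)) * hE4v
    have h3' := (mul_eq_zero.mp h).resolve_right (pow_ne_zero 2 h1pos.ne')
    linear_combination h3' + a2v b1 b2 b3 b2' * hE1v + (b1 + b3) * hE2v
  have heqv := (keyiff (a1v b1 b2 b3 b2') (a2v b1 b2 b3 b2') (a3v b1 b2 b3 b2')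
      (a2'v b1 b2 b3 b2') b1 b2 b3 b2').2 ⟨hE1v, hE2v, hE3v, hE4v⟩
  refine ⟨⟨(a1v b1 b2 b3 b2', a2v b1 b2 b3 b2', a3v b1 b2 b3 b2', a2'v b1 b2 b3 b2'),
      ⟨⟨h1pos, h2pos, h3pos, h2ppos⟩, heqv⟩, ?_⟩, hδ, heqv⟩
  rintro ⟨A1, A2, A3, A2p⟩ ⟨⟨hA1p, hA2p_, hA3p, hA2pp⟩, heq⟩
  obtain ⟨e1, e2, e3, e4⟩ := (keyiff A1 A2 A3 A2p b1 b2 b3 b2').1 heq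
  dsimp only at e1 e2 e3 e4 hA1p hA2p_ hA3p hA2pp ⊢
  have hA1S : A1 < b1 + b3 := by linarith only [e1, hA3p]
  have hQ : (b3 * (b2 + b2') - b1 * b2') * A1 ^ 2 + 2 * b1 ^ 2 * b2' * A1
      = b1 ^ 2 * b2' * (b1 + b3) := by
    linear_combination A1 ^ 2 * e3 - A1 ^ 2 * A2 * e1 - (b1 + b3) * A1 ^ 2 * e2
      + ((b1 + b3) - 2 * A1) * e4
  have hav : (s ^ 2 - b1 ^ 2) * a1v b1 b2 b3 b2' = (s - b1) * b1 * (b1 + b3) := by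
    rw [hA1]; field_simp; ring
  have hFS : ((b3 * (b2 + b2') - b1 * b2') * (A1 + a1v b1 b2 b3 b2') + 2 * b1 ^ 2 * b2') * (b1 + b3)
      = b2' * (s + b1) * ((s - b1) * A1 + b1 * (b1 + b3)) := by
    linear_combination (A1 + a1v b1 b2 b3 b2') * hc2S + b2' * hav
  have hpos2 : 0 < (s - b1) * A1 + b1 * (b1 + b3) := by
    have h := add_pos (mul_pos hs hA1p) (mul_pos hb1 (sub_pos.2 hA1S))
    linarith only [h]
  have hF : 0 < (b3 * (b2 + b2') - b1 * b2') * (A1 + a1v b1 b2 b3 b2') + 2 * b1 ^ 2 * b2' := by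
    have hr : 0 < b2' * (s + b1) * ((s - b1) * A1 + b1 * (b1 + b3)) := by positivity
    by_contra hn
    push_neg at hn
    have hle : ((b3 * (b2 + b2') - b1 * b2') * (A1 + a1v b1 b2 b3 b2') + 2 * b1 ^ 2 * b2')
        * (b1 + b3) ≤ 0 := mul_nonpos_iff.2 (Or.inr ⟨hn, hS.le⟩)
    rw [hFS] at hle
    exact absurd hle (not_le.2 hr)
  have hfac : (A1 - a1v b1 b2 b3 b2') *
      ((b3 * (b2 + b2') - b1 * b2') * (A1 + a1v b1 b2 b3 b2') + 2 * b1 ^ 2 * b2') = 0 := by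
    linear_combination hQ - hQv
  have hA1eq : A1 = a1v b1 b2 b3 b2' := by
    have h := (mul_eq_zero.mp hfac).resolve_right hF.ne'
    linarith only [h]
  have hA3eq : A3 = a3v b1 b2 b3 b2' := by linarith only [e1, hE1v, hA1eq]
  have hA2peq : A2p = a2'v b1 b2 b3 b2' := by
    rw [hA1eq] at e4
    have h2 : (a1v b1 b2 b3 b2') ^ 2 * A2p = (a1v b1 b2 b3 b2') ^ 2 * a2'v b1 b2 b3 b2' := by
      linarith
    exact mul_left_cancel₀ (pow_ne_zero 2 h1pos.ne') h2
  have hA2eq : A2 = a2v b1 b2 b3 b2' := by linarith only [e2, hE2v, hA2peq]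
  simp only [Prod.mk.injEq]
  exact ⟨hA1eq, hA2eq, hA3eq, hA2peq⟩
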